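/- Under the assumptions of the RQM privacy theorem, the mechanism satisfies (α, ε)-Rényi differential privacy for every α > 1 with ε = log(2(1−q)²(1 + c/Δ)) + m·log(1/(1−q)): for any x, x′ ∈ [−c,c], D_α(P_{Q(x)} ‖ P_{Q(x′)}) ≤ ε. -/

import Mathlib

/-- The evenly spaced quantization levels `B i = -X + 2iX/(m-1)` on `[-X, X]`. -/
noncomputable def Bgrid (X : ℝ) (m : ℕ) (i : ℕ) : ℝ := -X + 2 * i * X / (m - 1)

/-- The index `j` such that `x ∈ [B j, B (j+1))`. -/
noncomputable def jIdx (X : ℝ) (m : ℕ) (x : ℝ) : ℕ :=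
  ⌊(x + X) * (m - 1) / (2 * X)⌋₊

/-- The output distribution of the Randomized Quantization Mechanism
(Lemma 2 of the paper), parametrized by the bin index `j` with
`x ∈ [B j, B (j+1))`: the probability that the mechanism outputs level `i`. -/
noncomputable def rqmProbJ (X : ℝ) (m : ℕ) (q : ℝ) (j : ℕ) (x : ℝ) (i : ℕ) : ℝ :=
  let B := Bgrid X m
  if i = 0 then
    (1-q)^j * ((1-q)^(m-j-2) * (B (m-1) - x) / (B (m-1) - B i)
      + ∑ k ∈ Finset.Ico (j+1) (m-1), q * (1-q)^(k-j-1) * (B k - x) / (B k - B i))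
  else if i ≤ j then
    q * (1-q)^(j-i) * ((1-q)^(m-j-2) * (B (m-1) - x) / (B (m-1) - B i)
      + ∑ k ∈ Finset.Ico (j+1) (m-1), q * (1-q)^(k-j-1) * (B k - x) / (B k - B i))
  else if i = m - 1 then
    (1-q)^(i-j-1) * ((1-q)^j * (x - B 0) / (B i - B 0)
      + ∑ k ∈ Finset.Icc 1 j, q * (1-q)^(j-k) * (x - B k) / (B i - B k))
  else
    q * (1-q)^(i-j-1) * ((1-q)^j * (x - B 0) / (B i - B 0)
      + ∑ k ∈ Finset.Icc 1 j, q * (1-q)^(j-k) * (x - B k) / (B i - B k))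

/-- The output distribution of the Randomized Quantization Mechanism on
input `x`. -/
noncomputable def rqmProb (X : ℝ) (m : ℕ) (q : ℝ) (x : ℝ) (i : ℕ) : ℝ :=
  rqmProbJ X m q (jIdx X m x) x i

namespace RQMAux

lemma geom (q : ℝ) (n : ℕ) : ∑ t ∈ Finset.range n, q * (1-q)^t = 1 - (1-q)^n := by
  induction n with
  | zero => simp
  | succ n ih => rw [Finset.sum_range_succ, ih, pow_succ]; ring

lemma wsum (q : ℝ) (n : ℕ) :
    ∑ t ∈ Finset.range (n+1), (if t = n then (1-q)^n else q*(1-q)^t) = 1 := by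
  rw [Finset.sum_range_succ, if_pos rfl]
  rw [Finset.sum_congr rfl (fun t ht => if_neg (by simp at ht; omega)), geom]
  ring

lemma Bsub (X : ℝ) (m a b : ℕ) :
    Bgrid X m b - Bgrid X m a = 2 * X * ((b:ℝ) - (a:ℝ)) / ((m:ℝ) - 1) := by
  unfold Bgrid; ring

lemma Bsub_pos {X : ℝ} (hX : 0 < X) {m : ℕ} (hm : 2 ≤ m) {a b : ℕ} (hab : a < b) :
    0 < Bgrid X m b - Bgrid X m a := by
  rw [Bsub]
  have h1 : (0:ℝ) < (m:ℝ) - 1 := by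
    have : (2:ℝ) ≤ (m:ℝ) := by exact_mod_cast hm
    linarith
  have h2 : (0:ℝ) < (b:ℝ) - (a:ℝ) := by
    have : (a:ℝ) < (b:ℝ) := by exact_mod_cast hab
    linarith
  positivity

lemma B_le {X : ℝ} (hX : 0 < X) {m : ℕ} (hm : 2 ≤ m) {a b : ℕ} (hab : a ≤ b) :
    Bgrid X m a ≤ Bgrid X m b := by
  rcases eq_or_lt_of_le hab with h | h
  · rw [h]
  · linarith [Bsub_pos hX hm h]

lemma B_zero (X : ℝ) (m : ℕ) : Bgrid X m 0 = -X := by simp [Bgrid]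

lemma B_last {X : ℝ} {m : ℕ} (hm : 2 ≤ m) : Bgrid X m (m-1) = X := by
  unfold Bgrid
  have h1 : ((m-1 : ℕ) : ℝ) = (m:ℝ) - 1 := by
    have : (1:ℕ) ≤ m := by omega
    push_cast [this]; ring
  have h2 : (m:ℝ) - 1 ≠ 0 := by
    have : (2:ℝ) ≤ (m:ℝ) := by exact_mod_cast hm
    intro h; linarith
  rw [h1]
  field_simp
  ring

lemma B_mem {X : ℝ} (hX : 0 < X) {m : ℕ} (hm : 2 ≤ m) {i : ℕ} (hi : i ≤ m - 1) :
    -X ≤ Bgrid X m i ∧ Bgrid X m i ≤ X := by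
  constructor
  · rw [← B_zero X m]; exact B_le hX hm (Nat.zero_le i)
  · calc Bgrid X m i ≤ Bgrid X m (m-1) := B_le hX hm hi
      _ = X := B_last hm


noncomputable def cwf (q : ℝ) (j a : ℕ) : ℝ := if a = 0 then (1-q)^j else q*(1-q)^(j-a)

noncomputable def dwf (m : ℕ) (q : ℝ) (j b : ℕ) : ℝ :=
  if b = m-1 then (1-q)^(m-j-2) else q*(1-q)^(b-j-1)

noncomputable def SL (X : ℝ) (m : ℕ) (q : ℝ) (j : ℕ) (y : ℝ) (i : ℕ) : ℝ :=
  ∑ b ∈ Finset.Ico (j+1) m, dwf m q j b * ((Bgrid X m b - y)/(Bgrid X m b - Bgrid X m i))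

noncomputable def SR (X : ℝ) (m : ℕ) (q : ℝ) (j : ℕ) (y : ℝ) (i : ℕ) : ℝ :=
  ∑ a ∈ Finset.range (j+1), cwf q j a * ((y - Bgrid X m a)/(Bgrid X m i - Bgrid X m a))

lemma cw_sum (q : ℝ) (j : ℕ) : ∑ a ∈ Finset.range (j+1), cwf q j a = 1 := by
  rw [← Finset.sum_range_reflect (fun a => cwf q j a) (j+1)]
  rw [← wsum q j]
  refine Finset.sum_congr rfl (fun t ht => ?_)
  simp only [Finset.mem_range] at ht
  unfold cwf
  rcases eq_or_ne t j with h | h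
  · subst h; simp
  · have h1 : j - t ≠ 0 := by omega
    have h2 : j - (j - t) = t := by omega
    simp [h1, h2, h]

lemma dw_sum {m : ℕ} (hm : 2 ≤ m) (q : ℝ) {j : ℕ} (hj : j ≤ m - 2) :
    ∑ b ∈ Finset.Ico (j+1) m, dwf m q j b = 1 := by
  rw [Finset.sum_Ico_eq_sum_range]
  have hn : m - (j+1) = (m - j - 2) + 1 := by omega
  rw [hn, ← wsum q (m - j - 2)]
  refine Finset.sum_congr rfl (fun t ht => ?_)
  simp only [Finset.mem_range] at ht
  unfold dwf
  rcases eq_or_ne t (m - j - 2) with h | h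
  · subst h
    have h1 : j + 1 + (m - j - 2) = m - 1 := by omega
    simp [h1]
  · have h1 : j + 1 + t ≠ m - 1 := by omega
    have h2 : j + 1 + t - j - 1 = t := by omega
    simp [h1, h2, h]

lemma SL_eq (X : ℝ) {m : ℕ} (hm : 2 ≤ m) (q : ℝ) {j : ℕ} (hj : j ≤ m - 2) (y : ℝ) (i : ℕ) :
    SL X m q j y i
      = (1-q)^(m-j-2) * (Bgrid X m (m-1) - y) / (Bgrid X m (m-1) - Bgrid X m i)
        + ∑ k ∈ Finset.Ico (j+1) (m-1),
            q * (1-q)^(k-j-1) * (Bgrid X m k - y) / (Bgrid X m k - Bgrid X m i) := by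
  unfold SL
  have hmm : m = (m - 1) + 1 := by omega
  rw [show Finset.Ico (j+1) m = Finset.Ico (j+1) ((m-1)+1) from by rw [← hmm]]
  rw [Finset.sum_Ico_succ_top (by omega : j + 1 ≤ m - 1)]
  rw [add_comm]
  congr 1
  · unfold dwf; rw [if_pos rfl, mul_div_assoc]
  · refine Finset.sum_congr rfl (fun k hk => ?_)
    simp only [Finset.mem_Ico] at hk
    unfold dwf
    rw [if_neg (by omega), mul_div_assoc]

lemma SR_eq (X : ℝ) (m : ℕ) (q : ℝ) (j : ℕ) (y : ℝ) (i : ℕ) :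
    SR X m q j y i
      = (1-q)^j * (y - Bgrid X m 0) / (Bgrid X m i - Bgrid X m 0)
        + ∑ k ∈ Finset.Icc 1 j,
            q * (1-q)^(j-k) * (y - Bgrid X m k) / (Bgrid X m i - Bgrid X m k) := by
  unfold SR
  rw [Finset.sum_range_succ']
  rw [add_comm]
  congr 1
  · unfold cwf; rw [if_pos rfl, mul_div_assoc]
  · rw [show Finset.Icc 1 j = Finset.Ico 1 (j+1) from rfl, Finset.sum_Ico_eq_sum_range,
      Nat.add_sub_cancel]
    refine Finset.sum_congr rfl (fun t ht => ?_)
    unfold cwf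
    rw [if_neg (by omega), mul_div_assoc]
    have h1 : 1 + t = t + 1 := by omega
    have h2 : j - (t + 1) = j - t - 1 := by omega
    rw [h1, h2]

lemma probJ_left (X : ℝ) {m : ℕ} (hm : 2 ≤ m) (q : ℝ) {j : ℕ} (hj : j ≤ m - 2) (y : ℝ)
    {i : ℕ} (hi : i ≤ j) :
    rqmProbJ X m q j y i = cwf q j i * SL X m q j y i := by
  rw [SL_eq X hm q hj y i]
  unfold rqmProbJ cwf
  rcases eq_or_ne i 0 with h | h
  · subst h; simp
  · simp only [if_neg h, if_pos hi]

lemma probJ_right (X : ℝ) {m : ℕ} (hm : 2 ≤ m) (q : ℝ) {j : ℕ} (hj : j ≤ m - 2) (y : ℝ)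
    {i : ℕ} (hi : j < i) (him : i < m) :
    rqmProbJ X m q j y i = dwf m q j i * SR X m q j y i := by
  rw [SR_eq X m q j y i]
  unfold rqmProbJ dwf
  have h0 : i ≠ 0 := by omega
  have h1 : ¬ i ≤ j := by omega
  rcases eq_or_ne i (m-1) with h | h
  · simp only [if_neg h0, if_neg h1, if_pos h]
    rw [h, show m - 1 - j - 1 = m - j - 2 from by omega]
  · simp only [if_neg h0, if_neg h1, if_neg h]


lemma probJ_sum (X : ℝ) {m : ℕ} (hX : 0 < X) (hm : 2 ≤ m) (q : ℝ) {j : ℕ} (hj : j ≤ m - 2)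
    (y : ℝ) : ∑ i ∈ Finset.range m, rqmProbJ X m q j y i = 1 := by
  have hsplit : ∑ i ∈ Finset.range m, rqmProbJ X m q j y i
      = ∑ i ∈ Finset.range (j+1), rqmProbJ X m q j y i
        + ∑ i ∈ Finset.Ico (j+1) m, rqmProbJ X m q j y i := by
    rw [Finset.range_eq_Ico, ← Finset.sum_Ico_consecutive _ (by omega : 0 ≤ j+1) (by omega : j+1 ≤ m), Finset.range_eq_Ico]
  rw [hsplit]
  have hleft : ∑ i ∈ Finset.range (j+1), rqmProbJ X m q j y i
      = ∑ b ∈ Finset.Ico (j+1) m, ∑ a ∈ Finset.range (j+1),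
          cwf q j a * (dwf m q j b * ((Bgrid X m b - y)/(Bgrid X m b - Bgrid X m a))) := by
    rw [Finset.sum_comm]
    refine Finset.sum_congr rfl (fun a ha => ?_)
    simp only [Finset.mem_range] at ha
    rw [probJ_left X hm q hj y (by omega : a ≤ j)]
    unfold SL
    rw [Finset.mul_sum]
  have hright : ∑ i ∈ Finset.Ico (j+1) m, rqmProbJ X m q j y i
      = ∑ b ∈ Finset.Ico (j+1) m, ∑ a ∈ Finset.range (j+1),
          dwf m q j b * (cwf q j a * ((y - Bgrid X m a)/(Bgrid X m b - Bgrid X m a))) := by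
    refine Finset.sum_congr rfl (fun b hb => ?_)
    simp only [Finset.mem_Ico] at hb
    rw [probJ_right X hm q hj y (by omega : j < b) hb.2]
    unfold SR
    rw [Finset.mul_sum]
  rw [hleft, hright, ← Finset.sum_add_distrib]
  have hmain : ∀ b ∈ Finset.Ico (j+1) m,
      (∑ a ∈ Finset.range (j+1),
          cwf q j a * (dwf m q j b * ((Bgrid X m b - y)/(Bgrid X m b - Bgrid X m a))))
        + ∑ a ∈ Finset.range (j+1),
          dwf m q j b * (cwf q j a * ((y - Bgrid X m a)/(Bgrid X m b - Bgrid X m a)))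
      = dwf m q j b := by
    intro b hb
    simp only [Finset.mem_Ico] at hb
    rw [← Finset.sum_add_distrib]
    have : ∀ a ∈ Finset.range (j+1),
        cwf q j a * (dwf m q j b * ((Bgrid X m b - y)/(Bgrid X m b - Bgrid X m a)))
          + dwf m q j b * (cwf q j a * ((y - Bgrid X m a)/(Bgrid X m b - Bgrid X m a)))
        = cwf q j a * dwf m q j b := by
      intro a ha
      simp only [Finset.mem_range] at ha
      have hne : Bgrid X m b - Bgrid X m a ≠ 0 :=
        ne_of_gt (Bsub_pos hX hm (by omega : a < b))
      have hfrac : (Bgrid X m b - y)/(Bgrid X m b - Bgrid X m a)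
          + (y - Bgrid X m a)/(Bgrid X m b - Bgrid X m a) = 1 := by
        rw [← add_div,
          show Bgrid X m b - y + (y - Bgrid X m a) = Bgrid X m b - Bgrid X m a from by ring,
          div_self hne]
      linear_combination (cwf q j a * dwf m q j b) * hfrac
    rw [Finset.sum_congr rfl this, ← Finset.sum_mul, cw_sum, one_mul]
  rw [Finset.sum_congr rfl hmain, dw_sum hm q hj]

section Bounds

variable {X q Δ y : ℝ} {m j : ℕ}

lemma cwf_nonneg (hq0 : 0 < q) (hq1 : q < 1) (j a : ℕ) : 0 ≤ cwf q j a := by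
  have h : (0:ℝ) ≤ 1 - q := by linarith
  unfold cwf
  split
  · exact pow_nonneg h _
  · exact mul_nonneg hq0.le (pow_nonneg h _)

lemma dwf_nonneg (hq0 : 0 < q) (hq1 : q < 1) (m j b : ℕ) : 0 ≤ dwf m q j b := by
  have h : (0:ℝ) ≤ 1 - q := by linarith
  unfold dwf
  split
  · exact pow_nonneg h _
  · exact mul_nonneg hq0.le (pow_nonneg h _)

lemma SL_nonneg (hX : 0 < X) (hm : 2 ≤ m) (hq0 : 0 < q) (hq1 : q < 1)
    (hj : j ≤ m - 2) (hyj : y ≤ Bgrid X m (j+1)) {i : ℕ} (hi : i ≤ j) :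
    0 ≤ SL X m q j y i := by
  refine Finset.sum_nonneg (fun b hb => ?_)
  simp only [Finset.mem_Ico] at hb
  refine mul_nonneg (dwf_nonneg hq0 hq1 m j b) (div_nonneg ?_ ?_)
  · have := B_le hX hm hb.1
    linarith
  · exact le_of_lt (Bsub_pos hX hm (by omega : i < b))

lemma SL_le_one (hX : 0 < X) (hm : 2 ≤ m) (hq0 : 0 < q) (hq1 : q < 1)
    (hj : j ≤ m - 2) (hjy : Bgrid X m j ≤ y) {i : ℕ} (hi : i ≤ j) :
    SL X m q j y i ≤ 1 := by
  rw [← dw_sum hm q hj]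
  refine Finset.sum_le_sum (fun b hb => ?_)
  simp only [Finset.mem_Ico] at hb
  refine mul_le_of_le_one_right (dwf_nonneg hq0 hq1 m j b) ?_
  rw [div_le_one (Bsub_pos hX hm (by omega : i < b))]
  have := B_le hX hm hi
  linarith

lemma SR_nonneg (hX : 0 < X) (hm : 2 ≤ m) (hq0 : 0 < q) (hq1 : q < 1)
    (hj : j ≤ m - 2) (hjy : Bgrid X m j ≤ y) {i : ℕ} (hi : j < i) :
    0 ≤ SR X m q j y i := by
  refine Finset.sum_nonneg (fun a ha => ?_)
  simp only [Finset.mem_range] at ha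
  refine mul_nonneg (cwf_nonneg hq0 hq1 j a) (div_nonneg ?_ ?_)
  · have := B_le hX hm (by omega : a ≤ j)
    linarith
  · exact le_of_lt (Bsub_pos hX hm (by omega : a < i))

lemma SR_le_one (hX : 0 < X) (hm : 2 ≤ m) (hq0 : 0 < q) (hq1 : q < 1)
    (hj : j ≤ m - 2) (hyj : y ≤ Bgrid X m (j+1)) {i : ℕ} (hi : j < i) :
    SR X m q j y i ≤ 1 := by
  rw [← cw_sum q j]
  refine Finset.sum_le_sum (fun a ha => ?_)
  simp only [Finset.mem_range] at ha
  refine mul_le_of_le_one_right (cwf_nonneg hq0 hq1 j a) ?_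
  rw [div_le_one (Bsub_pos hX hm (by omega : a < i))]
  have := B_le hX hm (by omega : j + 1 ≤ i)
  linarith

lemma SL_lb (hX : 0 < X) (hm : 2 ≤ m) (hq0 : 0 < q) (hq1 : q < 1)
    (hj : j ≤ m - 2) (hyj : y ≤ Bgrid X m (j+1)) (hΔ : 0 < Δ) (hΔy : Δ ≤ X - y)
    {i : ℕ} (hi : i ≤ j) :
    (1-q)^(m-j-2) * (Δ/(2*X)) ≤ SL X m q j y i := by
  have hmem : m - 1 ∈ Finset.Ico (j+1) m := by
    simp only [Finset.mem_Ico]; omega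
  have hterms : ∀ b ∈ Finset.Ico (j+1) m,
      0 ≤ dwf m q j b * ((Bgrid X m b - y)/(Bgrid X m b - Bgrid X m i)) := by
    intro b hb
    simp only [Finset.mem_Ico] at hb
    refine mul_nonneg (dwf_nonneg hq0 hq1 m j b) (div_nonneg ?_ ?_)
    · have h1 := B_le hX hm hb.1
      linarith
    · exact le_of_lt (Bsub_pos hX hm (by omega : i < b))
  refine le_trans ?_ (Finset.single_le_sum hterms hmem)
  unfold dwf
  rw [if_pos rfl, B_last hm]
  refine mul_le_mul_of_nonneg_left ?_ (pow_nonneg (by linarith) _)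
  have hiB := B_mem hX hm (by omega : i ≤ m - 1)
  have hBiX : Bgrid X m i < X := by
    have := Bsub_pos hX hm (by omega : i < m - 1)
    rw [B_last hm] at this
    linarith
  exact div_le_div₀ (by linarith) hΔy (by linarith) (by linarith)

lemma SR_lb (hX : 0 < X) (hm : 2 ≤ m) (hq0 : 0 < q) (hq1 : q < 1)
    (hj : j ≤ m - 2) (hjy : Bgrid X m j ≤ y) (hΔ : 0 < Δ) (hΔy : Δ ≤ X + y)
    {i : ℕ} (hi : j < i) (him : i ≤ m - 1) :
    (1-q)^j * (Δ/(2*X)) ≤ SR X m q j y i := by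
  have hmem : 0 ∈ Finset.range (j+1) := by simp
  have hterms : ∀ a ∈ Finset.range (j+1),
      0 ≤ cwf q j a * ((y - Bgrid X m a)/(Bgrid X m i - Bgrid X m a)) := by
    intro a ha
    simp only [Finset.mem_range] at ha
    refine mul_nonneg (cwf_nonneg hq0 hq1 j a) (div_nonneg ?_ ?_)
    · have := B_le hX hm (by omega : a ≤ j)
      linarith
    · exact le_of_lt (Bsub_pos hX hm (by omega : a < i))
  refine le_trans ?_ (Finset.single_le_sum hterms hmem)
  unfold cwf
  rw [if_pos rfl, B_zero]
  refine mul_le_mul_of_nonneg_left ?_ (pow_nonneg (by linarith) _)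
  have hiB := B_mem hX hm him
  have h0i : Bgrid X m 0 < Bgrid X m i := by
    have := Bsub_pos hX hm (by omega : 0 < i)
    linarith
  rw [B_zero] at h0i
  have : y - -X = y + X := by ring
  rw [this, show Bgrid X m i - -X = Bgrid X m i + X from by ring]
  exact div_le_div₀ (by linarith) (by linarith) (by linarith) (by linarith)

end Bounds

section PBounds

variable {X q Δ y : ℝ} {m j : ℕ}

lemma probJ_nonneg (hX : 0 < X) (hm : 2 ≤ m) (hq0 : 0 < q) (hq1 : q < 1)
    (hj : j ≤ m - 2) (hjy : Bgrid X m j ≤ y) (hyj : y ≤ Bgrid X m (j+1))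
    {i : ℕ} (him : i < m) : 0 ≤ rqmProbJ X m q j y i := by
  rcases le_or_gt i j with hi | hi
  · rw [probJ_left X hm q hj y hi]
    exact mul_nonneg (cwf_nonneg hq0 hq1 j i) (SL_nonneg hX hm hq0 hq1 hj hyj hi)
  · rw [probJ_right X hm q hj y hi him]
    exact mul_nonneg (dwf_nonneg hq0 hq1 m j i) (SR_nonneg hX hm hq0 hq1 hj hjy hi)

lemma probJ_upper (hX : 0 < X) (hm : 2 ≤ m) (hq0 : 0 < q) (hq1 : q < 1)
    (hj : j ≤ m - 2) (hjy : Bgrid X m j ≤ y) (hyj : y ≤ Bgrid X m (j+1))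
    {i : ℕ} (him : i < m) :
    rqmProbJ X m q j y i ≤ (if i = 0 ∨ i = m - 1 then 1 else q) := by
  have h01 : (0:ℝ) ≤ 1 - q := by linarith
  have h1le : (1:ℝ) - q ≤ 1 := by linarith
  rcases le_or_gt i j with hi | hi
  · rw [probJ_left X hm q hj y hi]
    have hS := SL_le_one hX hm hq0 hq1 hj hjy hi
    have hSnn := SL_nonneg hX hm hq0 hq1 hj hyj hi
    have hc : cwf q j i ≤ (if i = 0 ∨ i = m - 1 then 1 else q) := by
      unfold cwf
      rcases eq_or_ne i 0 with h0 | h0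
      · rw [if_pos h0, if_pos (Or.inl h0)]
        exact pow_le_one₀ h01 h1le
      · rw [if_neg h0, if_neg (by omega)]
        exact mul_le_of_le_one_right hq0.le (pow_le_one₀ h01 h1le)
    calc cwf q j i * SL X m q j y i ≤ cwf q j i * 1 :=
          mul_le_mul_of_nonneg_left hS (cwf_nonneg hq0 hq1 j i)
      _ = cwf q j i := mul_one _
      _ ≤ _ := hc
  · rw [probJ_right X hm q hj y hi him]
    have hS := SR_le_one hX hm hq0 hq1 hj hyj hi
    have hd : dwf m q j i ≤ (if i = 0 ∨ i = m - 1 then 1 else q) := by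
      unfold dwf
      rcases eq_or_ne i (m-1) with h0 | h0
      · rw [if_pos h0, if_pos (Or.inr h0)]
        exact pow_le_one₀ h01 h1le
      · rw [if_neg h0, if_neg (by omega)]
        exact mul_le_of_le_one_right hq0.le (pow_le_one₀ h01 h1le)
    calc dwf m q j i * SR X m q j y i ≤ dwf m q j i * 1 :=
          mul_le_mul_of_nonneg_left hS (dwf_nonneg hq0 hq1 m j i)
      _ = dwf m q j i := mul_one _
      _ ≤ _ := hd

lemma probJ_lower (hX : 0 < X) (hm : 2 ≤ m) (hq0 : 0 < q) (hq1 : q < 1)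
    (hj : j ≤ m - 2) (hjy : Bgrid X m j ≤ y) (hyj : y ≤ Bgrid X m (j+1))
    (hΔ : 0 < Δ) (hΔl : Δ ≤ X - y) (hΔr : Δ ≤ X + y)
    {i : ℕ} (him : i < m) :
    (if i = 0 ∨ i = m - 1 then 1 else q) * ((1-q)^(m-2) * (Δ/(2*X)))
      ≤ rqmProbJ X m q j y i := by
  have h01 : (0:ℝ) ≤ 1 - q := by linarith
  have h1le : (1:ℝ) - q ≤ 1 := by linarith
  have hD : 0 ≤ Δ/(2*X) := by positivity
  rcases le_or_gt i j with hi | hi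
  · rw [probJ_left X hm q hj y hi]
    have hS := SL_lb hX hm hq0 hq1 hj hyj hΔ hΔl hi
    rcases eq_or_ne i 0 with h0 | h0
    · rw [if_pos (Or.inl h0)]
      unfold cwf; rw [if_pos h0]
      calc 1 * ((1-q)^(m-2) * (Δ/(2*X)))
          = ((1-q)^j * (1-q)^(m-j-2)) * (Δ/(2*X)) := by
            rw [← pow_add, one_mul]
            congr 2
            omega
        _ = (1-q)^j * ((1-q)^(m-j-2) * (Δ/(2*X))) := by ring
        _ ≤ (1-q)^j * SL X m q j y i :=
            mul_le_mul_of_nonneg_left hS (pow_nonneg h01 _)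
    · rw [if_neg (by omega)]
      unfold cwf; rw [if_neg h0]
      have key : (1-q)^(m-2) ≤ (1-q)^(j-i) * (1-q)^(m-j-2) := by
        rw [← pow_add]
        exact pow_le_pow_of_le_one h01 h1le (by omega)
      calc q * ((1-q)^(m-2) * (Δ/(2*X)))
          ≤ q * (((1-q)^(j-i) * (1-q)^(m-j-2)) * (Δ/(2*X))) := by
            refine mul_le_mul_of_nonneg_left ?_ hq0.le
            exact mul_le_mul_of_nonneg_right key hD
        _ = q * (1-q)^(j-i) * ((1-q)^(m-j-2) * (Δ/(2*X))) := by ring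
        _ ≤ q * (1-q)^(j-i) * SL X m q j y i :=
            mul_le_mul_of_nonneg_left hS
              (mul_nonneg hq0.le (pow_nonneg h01 _))
  · rw [probJ_right X hm q hj y hi him]
    have hS := SR_lb hX hm hq0 hq1 hj hjy hΔ hΔr hi (by omega : i ≤ m - 1)
    rcases eq_or_ne i (m-1) with h0 | h0
    · rw [if_pos (Or.inr h0)]
      unfold dwf; rw [if_pos h0]
      calc 1 * ((1-q)^(m-2) * (Δ/(2*X)))
          = ((1-q)^(m-j-2) * (1-q)^j) * (Δ/(2*X)) := by
            rw [← pow_add, one_mul]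
            congr 2
            omega
        _ = (1-q)^(m-j-2) * ((1-q)^j * (Δ/(2*X))) := by ring
        _ ≤ (1-q)^(m-j-2) * SR X m q j y i :=
            mul_le_mul_of_nonneg_left hS (pow_nonneg h01 _)
    · rw [if_neg (by omega)]
      unfold dwf; rw [if_neg h0]
      have key : (1-q)^(m-2) ≤ (1-q)^(i-j-1) * (1-q)^j := by
        rw [← pow_add]
        exact pow_le_pow_of_le_one h01 h1le (by omega)
      calc q * ((1-q)^(m-2) * (Δ/(2*X)))
          ≤ q * (((1-q)^(i-j-1) * (1-q)^j) * (Δ/(2*X))) := by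
            refine mul_le_mul_of_nonneg_left ?_ hq0.le
            exact mul_le_mul_of_nonneg_right key hD
        _ = q * (1-q)^(i-j-1) * ((1-q)^j * (Δ/(2*X))) := by ring
        _ ≤ q * (1-q)^(i-j-1) * SR X m q j y i :=
            mul_le_mul_of_nonneg_left hS
              (mul_nonneg hq0.le (pow_nonneg h01 _))

end PBounds

lemma jIdx_spec {c Δ : ℝ} (hc : 0 < c) (hΔ : 0 < Δ) {m : ℕ} (hm : 2 ≤ m) {y : ℝ}
    (hy : y ∈ Set.Icc (-c) c) :
    jIdx (c+Δ) m y ≤ m - 2 ∧ Bgrid (c+Δ) m (jIdx (c+Δ) m y) ≤ y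
      ∧ y ≤ Bgrid (c+Δ) m (jIdx (c+Δ) m y + 1) := by
  obtain ⟨hy1, hy2⟩ := hy
  set X := c + Δ with hXdef
  have hX : 0 < X := by positivity
  have hm1 : (1:ℝ) ≤ (m:ℝ) - 1 := by
    have : (2:ℝ) ≤ (m:ℝ) := by exact_mod_cast hm
    linarith
  have hm1pos : (0:ℝ) < (m:ℝ) - 1 := by linarith
  have h2X : (0:ℝ) < 2 * X := by linarith
  set z := (y + X) * ((m:ℝ) - 1) / (2 * X) with hzdef
  have hyX : 0 < y + X := by
    simp only [hXdef]; linarith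
  have hz : 0 ≤ z := by positivity
  have hfl : (↑(jIdx X m y) : ℝ) ≤ z := by
    unfold jIdx
    exact Nat.floor_le hz
  have hfl2 : z < ↑(jIdx X m y) + 1 := by
    unfold jIdx
    exact Nat.lt_floor_add_one z
  refine ⟨?_, ?_, ?_⟩
  · have hlt : jIdx X m y < m - 1 := by
      unfold jIdx
      rw [Nat.floor_lt hz]
      have hcast : ((m - 1 : ℕ) : ℝ) = (m:ℝ) - 1 := by
        have : (1:ℕ) ≤ m := by omega
        push_cast [this]; ring
      rw [hcast]
      rw [div_lt_iff₀ h2X]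
      have hyltX : y < X := by simp only [hXdef]; linarith
      nlinarith
    omega
  · have h1 : (↑(jIdx X m y) : ℝ) * (2 * X) ≤ (y + X) * ((m:ℝ) - 1) := by
      have := (le_div_iff₀ h2X).mp hfl
      linarith
    unfold Bgrid
    rw [← sub_nonneg]
    have h2 : 2 * (↑(jIdx X m y) : ℝ) * X / ((m:ℝ) - 1) ≤ y + X := by
      rw [div_le_iff₀ hm1pos]
      nlinarith
    linarith
  · have h1 : (y + X) * ((m:ℝ) - 1) ≤ (↑(jIdx X m y) + 1) * (2 * X) := by
      have h2 := (div_le_iff₀ h2X).mp (le_of_lt hfl2)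
      nlinarith
    unfold Bgrid
    rw [← sub_nonneg]
    have h2 : y + X ≤ 2 * (↑(jIdx X m y) + 1 : ℝ) * X / ((m:ℝ) - 1) := by
      rw [le_div_iff₀ hm1pos]
      nlinarith
    push_cast
    push_cast at h2
    linarith

lemma term_bound {P Q E a : ℝ} (hP : 0 ≤ P) (hQ : 0 < Q) (hE : 0 < E)
    (hPQ : P ≤ E * Q) (ha : 1 < a) :
    P ^ a * Q ^ (1 - a) ≤ E ^ (a - 1) * P := by
  rcases eq_or_lt_of_le hP with h0 | hP0
  · rw [← h0, Real.zero_rpow (by linarith : a ≠ 0), zero_mul, mul_zero]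
  · have hsplit : P ^ a = P ^ (1:ℝ) * P ^ (a - 1) := by
      rw [← Real.rpow_add hP0]
      norm_num
    calc P ^ a * Q ^ (1 - a) = (P * P ^ (a - 1)) * Q ^ (1 - a) := by
          rw [hsplit, Real.rpow_one]
      _ ≤ (P * (E * Q) ^ (a - 1)) * Q ^ (1 - a) := by
          refine mul_le_mul_of_nonneg_right ?_ (Real.rpow_nonneg hQ.le _)
          exact mul_le_mul_of_nonneg_left
            (Real.rpow_le_rpow hP0.le hPQ (by linarith)) hP0.le
      _ = E ^ (a - 1) * P * (Q ^ (a - 1) * Q ^ (1 - a)) := by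
          rw [Real.mul_rpow hE.le hQ.le]; ring
      _ = E ^ (a - 1) * P := by
          rw [← Real.rpow_add hQ, show a - 1 + (1 - a) = 0 from by ring,
            Real.rpow_zero, mul_one]

end RQMAux

/-- The Randomized Quantization Mechanism satisfies `(α, ε)`-Rényi differential
privacy for every `α > 1` with
`ε = log(2(1-q)²(1+c/Δ)) + m·log(1/(1-q))`. -/
theorem rqm_renyi_dp (c Δ : ℝ) (hc : 0 < c) (hΔ : 0 < Δ)
    (m : ℕ) (hm : 2 ≤ m) (q : ℝ) (hq : q ∈ Set.Ioo (0:ℝ) 1)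
    (α : ℝ) (hα : 1 < α)
    (x x' : ℝ) (hx : x ∈ Set.Icc (-c) c) (hx' : x' ∈ Set.Icc (-c) c) :
    (1 / (α - 1)) * Real.log (∑ i ∈ Finset.range m,
        rqmProb (c+Δ) m q x i ^ α * rqmProb (c+Δ) m q x' i ^ (1 - α)) ≤
      Real.log (2 * (1-q)^2 * (1 + c/Δ)) + m * Real.log (1/(1-q)) := by
  obtain ⟨hq0, hq1⟩ := hq
  have hX : (0:ℝ) < c + Δ := by linarith
  have h1q : (0:ℝ) < 1 - q := by linarith
  obtain ⟨hjx, hBx, hxB⟩ := RQMAux.jIdx_spec hc hΔ hm hx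
  obtain ⟨hjx', hBx', hxB'⟩ := RQMAux.jIdx_spec hc hΔ hm hx'
  have hxl : Δ ≤ (c+Δ) - x := by have := hx.2; linarith
  have hxr : Δ ≤ (c+Δ) + x := by have := hx.1; linarith
  have hx'l : Δ ≤ (c+Δ) - x' := by have := hx'.2; linarith
  have hx'r : Δ ≤ (c+Δ) + x' := by have := hx'.1; linarith
  set E := 2*(1+c/Δ)/(1-q)^(m-2) with hE
  have hEpos : 0 < E := by positivity
  set K := (1-q)^(m-2) * (Δ/(2*(c+Δ))) with hK
  have hKpos : 0 < K := by positivity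
  have hEK : E * K = 1 := by
    rw [hE, hK]
    field_simp
    ring
  have hPnn : ∀ i, i < m → 0 ≤ rqmProb (c+Δ) m q x i := by
    intro i hi
    exact RQMAux.probJ_nonneg hX hm hq0 hq1 hjx hBx hxB hi
  have hup : ∀ i, i < m →
      rqmProb (c+Δ) m q x i ≤ (if i = 0 ∨ i = m-1 then 1 else q) := by
    intro i hi
    exact RQMAux.probJ_upper hX hm hq0 hq1 hjx hBx hxB hi
  have hlow' : ∀ i, i < m →
      (if i = 0 ∨ i = m-1 then 1 else q) * K ≤ rqmProb (c+Δ) m q x' i := by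
    intro i hi
    exact RQMAux.probJ_lower hX hm hq0 hq1 hjx' hBx' hxB' hΔ hx'l hx'r hi
  have hlow : ∀ i, i < m →
      (if i = 0 ∨ i = m-1 then 1 else q) * K ≤ rqmProb (c+Δ) m q x i := by
    intro i hi
    exact RQMAux.probJ_lower hX hm hq0 hq1 hjx hBx hxB hΔ hxl hxr hi
  have htK : ∀ i : ℕ, 0 < (if i = 0 ∨ i = m-1 then (1:ℝ) else q) * K := by
    intro i
    split
    · linarith
    · nlinarith
  have hQpos : ∀ i, i < m → 0 < rqmProb (c+Δ) m q x' i := by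
    intro i hi
    exact lt_of_lt_of_le (htK i) (hlow' i hi)
  have hPpos0 : 0 < rqmProb (c+Δ) m q x 0 := by
    refine lt_of_lt_of_le (htK 0) (hlow 0 (by omega))
  have hratio : ∀ i, i < m →
      rqmProb (c+Δ) m q x i ≤ E * rqmProb (c+Δ) m q x' i := by
    intro i hi
    calc rqmProb (c+Δ) m q x i ≤ (if i = 0 ∨ i = m-1 then 1 else q) := hup i hi
      _ = (if i = 0 ∨ i = m-1 then 1 else q) * (E * K) := by rw [hEK, mul_one]
      _ = E * ((if i = 0 ∨ i = m-1 then 1 else q) * K) := by ring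
      _ ≤ E * rqmProb (c+Δ) m q x' i :=
          mul_le_mul_of_nonneg_left (hlow' i hi) hEpos.le
  have hsum : ∑ i ∈ Finset.range m, rqmProb (c+Δ) m q x i = 1 := by
    unfold rqmProb
    exact RQMAux.probJ_sum (c+Δ) hX hm q hjx x
  have hterm : ∀ i ∈ Finset.range m,
      rqmProb (c+Δ) m q x i ^ α * rqmProb (c+Δ) m q x' i ^ (1-α)
        ≤ E^(α-1) * rqmProb (c+Δ) m q x i := by
    intro i hi
    simp only [Finset.mem_range] at hi
    exact RQMAux.term_bound (hPnn i hi) (hQpos i hi) hEpos (hratio i hi) hα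
  have hsle : (∑ i ∈ Finset.range m,
      rqmProb (c+Δ) m q x i ^ α * rqmProb (c+Δ) m q x' i ^ (1-α)) ≤ E^(α-1) := by
    calc (∑ i ∈ Finset.range m,
        rqmProb (c+Δ) m q x i ^ α * rqmProb (c+Δ) m q x' i ^ (1-α))
        ≤ ∑ i ∈ Finset.range m, E^(α-1) * rqmProb (c+Δ) m q x i :=
          Finset.sum_le_sum hterm
      _ = E^(α-1) := by rw [← Finset.mul_sum, hsum, mul_one]
  have hspos : 0 < ∑ i ∈ Finset.range m,
      rqmProb (c+Δ) m q x i ^ α * rqmProb (c+Δ) m q x' i ^ (1-α) := by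
    refine Finset.sum_pos' (fun i hi => ?_) ⟨0, by simp; omega, ?_⟩
    · simp only [Finset.mem_range] at hi
      exact mul_nonneg (Real.rpow_nonneg (hPnn i hi) _)
        (Real.rpow_nonneg (hQpos i hi).le _)
    · exact mul_pos (Real.rpow_pos_of_pos hPpos0 _)
        (Real.rpow_pos_of_pos (hQpos 0 (by omega)) _)
  have hα1 : (0:ℝ) < α - 1 := by linarith
  have hlog : Real.log (∑ i ∈ Finset.range m,
      rqmProb (c+Δ) m q x i ^ α * rqmProb (c+Δ) m q x' i ^ (1-α))
        ≤ (α-1) * Real.log E := by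
    calc Real.log (∑ i ∈ Finset.range m,
        rqmProb (c+Δ) m q x i ^ α * rqmProb (c+Δ) m q x' i ^ (1-α))
        ≤ Real.log (E^(α-1)) := Real.log_le_log hspos hsle
      _ = (α-1) * Real.log E := Real.log_rpow hEpos _
  have hfinal : (1/(α-1)) * Real.log (∑ i ∈ Finset.range m,
      rqmProb (c+Δ) m q x i ^ α * rqmProb (c+Δ) m q x' i ^ (1-α)) ≤ Real.log E := by
    calc (1/(α-1)) * Real.log (∑ i ∈ Finset.range m,
        rqmProb (c+Δ) m q x i ^ α * rqmProb (c+Δ) m q x' i ^ (1-α))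
        ≤ (1/(α-1)) * ((α-1) * Real.log E) := by
          refine mul_le_mul_of_nonneg_left hlog (by positivity)
      _ = Real.log E := by field_simp
  refine le_trans hfinal (le_of_eq ?_)
  have hmcast : ((m-2:ℕ):ℝ) = (m:ℝ) - 2 := by
    have h2 : (2:ℕ) ≤ m := hm
    push_cast [h2]
    ring
  have hcd : (0:ℝ) < 1 + c/Δ := by positivity
  have e1 : Real.log (2*(1-q)^2*(1+c/Δ))
      = Real.log 2 + 2*Real.log (1-q) + Real.log (1+c/Δ) := by
    rw [Real.log_mul (by positivity) (ne_of_gt hcd),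
      Real.log_mul (by norm_num) (by positivity), Real.log_pow]
    push_cast
    ring
  have e2 : Real.log (1/(1-q)) = -Real.log (1-q) := by
    rw [one_div, Real.log_inv]
  have e3 : Real.log E = Real.log 2 + Real.log (1+c/Δ) - ((m:ℝ)-2) * Real.log (1-q) := by
    rw [hE, Real.log_div (by positivity) (by positivity), Real.log_pow,
      Real.log_mul (by norm_num) (ne_of_gt hcd), hmcast]
  rw [e1, e2, e3]
  ring
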